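/- Let n and w be positive integers and let sigma, tau : {1,...,w} -> {1,...,n} be strictly increasing maps. Let p_1,...,p_n be independent random variables, each uniform on [0,1], and conditionally on p_1,...,p_n let X_1,...,X_w, Y_1,...,Y_w be mutually independent bits with X_t ~ Bernoulli(p_{sigma(t)}) and Y_t ~ Bernoulli(p_{tau(t)}). Let q be the number of indices t with sigma(t) = tau(t) and let r = w - q. Then for every beta > 0, the probability that | sum over t = 1,...,w of |X_t - Y_t| minus (q/3 + r/2) | >= beta is at most 2*exp(-2*beta^2 / w). -/

import Mathlib

open MeasureTheory

/-- The distribution of `n` independent probabilities, each uniform on `[0,1]`. -/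
noncomputable def uniformCube (n : ℕ) : Measure (Fin n → ℝ) :=
  Measure.pi fun _ => volume.restrict (Set.Icc (0:ℝ) 1)


/-- Hoeffding's lemma for a Bernoulli(μ) random variable. -/
lemma bern_mgf_le (μ lam : ℝ) (h0 : 0 ≤ μ) (h1 : μ ≤ 1) :
    (1 - μ) * Real.exp (lam * (0 - μ)) + μ * Real.exp (lam * (1 - μ))
      ≤ Real.exp (lam ^ 2 / 8) := by
  have key : 1 - μ + μ * Real.exp lam ≤ Real.exp (μ * lam + lam ^ 2 / 8) := by
    rcases eq_or_lt_of_le h0 with h0' | h0'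
    · subst h0'; simpa using Real.one_le_exp (by positivity)
    rcases eq_or_lt_of_le h1 with h1' | h1'
    · subst h1'
      simp only [sub_self, zero_add, one_mul]
      exact Real.exp_le_exp.2 (by nlinarith [sq_nonneg lam])
    -- now 0 < μ < 1
    have hD : ∀ x : ℝ, 0 < 1 - μ + μ * Real.exp x := fun x => by
      have := Real.exp_pos x; nlinarith
    set g : ℝ → ℝ := fun x => μ * x + x ^ 2 / 8 - Real.log (1 - μ + μ * Real.exp x) with hg
    set φ : ℝ → ℝ := fun x => μ + x / 4 - μ * Real.exp x / (1 - μ + μ * Real.exp x) with hφ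
    have hder : ∀ x : ℝ, HasDerivAt g (φ x) x := by
      intro x
      have hexp : HasDerivAt (fun y : ℝ => 1 - μ + μ * Real.exp y) (μ * Real.exp x) x := by
        simpa using ((Real.hasDerivAt_exp x).const_mul μ).const_add (1 - μ)
      have hlog : HasDerivAt (fun y : ℝ => Real.log (1 - μ + μ * Real.exp y))
          (μ * Real.exp x / (1 - μ + μ * Real.exp x)) x := hexp.log (hD x).ne'
      have h1' : HasDerivAt (fun y : ℝ => μ * y + y ^ 2 / 8) (μ + 2 * x / 8) x := by
        simpa using ((hasDerivAt_id x).const_mul μ).fun_add (((hasDerivAt_pow 2 x)).div_const 8)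
      have := h1'.fun_sub hlog
      refine this.congr_deriv ?_
      simp only [hφ]; ring
    have hφder : ∀ x : ℝ, HasDerivAt φ
        (1 / 4 - μ * Real.exp x * (1 - μ) / (1 - μ + μ * Real.exp x) ^ 2) x := by
      intro x
      have hexp : HasDerivAt (fun y : ℝ => μ * Real.exp y) (μ * Real.exp x) x :=
        (Real.hasDerivAt_exp x).const_mul μ
      have hD' : HasDerivAt (fun y : ℝ => 1 - μ + μ * Real.exp y) (μ * Real.exp x) x := by
        simpa using hexp.const_add (1 - μ)
      have hdiv := hexp.div hD' (hD x).ne'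
      have hlin : HasDerivAt (fun y : ℝ => μ + y / 4) (1 / 4) x := by
        simpa using ((hasDerivAt_id x).div_const 4).const_add μ
      have := hlin.fun_sub hdiv
      refine this.congr_deriv ?_
      field_simp
      ring
    have hφmono : Monotone φ := by
      apply monotone_of_deriv_nonneg (fun x => (hφder x).differentiableAt)
      intro x
      rw [(hφder x).deriv]
      have hDx := hD x
      have hex := Real.exp_pos x
      rw [sub_nonneg, div_le_iff₀ (by positivity)]
      nlinarith [sq_nonneg (1 - μ - μ * Real.exp x)]
    have hφ0 : φ 0 = 0 := by simp [hφ]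
    have hg0 : g 0 = 0 := by simp [hg]
    have hgnonneg : ∀ x : ℝ, 0 ≤ g x := by
      intro x
      rcases le_total 0 x with hx | hx
      · have hmono : MonotoneOn g (Set.Ici (0:ℝ)) := by
          apply monotoneOn_of_deriv_nonneg (convex_Ici 0)
            (fun y _ => (hder y).differentiableAt.continuousAt.continuousWithinAt)
            (fun y _ => (hder y).differentiableAt.differentiableWithinAt)
          intro y hy
          rw [(hder y).deriv, ← hφ0]
          exact hφmono (le_of_lt (by simpa using hy))
        have := hmono (Set.self_mem_Ici) (Set.mem_Ici.2 hx) hx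
        rwa [hg0] at this
      · have hmono : AntitoneOn g (Set.Iic (0:ℝ)) := by
          apply antitoneOn_of_deriv_nonpos (convex_Iic 0)
            (fun y _ => (hder y).differentiableAt.continuousAt.continuousWithinAt)
            (fun y _ => (hder y).differentiableAt.differentiableWithinAt)
          intro y hy
          rw [(hder y).deriv, ← hφ0]
          exact hφmono (le_of_lt (by simpa using hy))
        have := hmono (Set.mem_Iic.2 hx) (Set.self_mem_Iic) hx
        rwa [hg0] at this
    have := hgnonneg lam
    have hlog : Real.log (1 - μ + μ * Real.exp lam) ≤ μ * lam + lam ^ 2 / 8 := by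
      simp only [hg] at this; linarith
    calc 1 - μ + μ * Real.exp lam
        = Real.exp (Real.log (1 - μ + μ * Real.exp lam)) := (Real.exp_log (hD lam)).symm
      _ ≤ Real.exp (μ * lam + lam ^ 2 / 8) := Real.exp_le_exp.2 hlog
  have expand : (1 - μ) * Real.exp (lam * (0 - μ)) + μ * Real.exp (lam * (1 - μ))
      = Real.exp (-(lam * μ)) * (1 - μ + μ * Real.exp lam) := by
    rw [show lam * (0 - μ) = -(lam * μ) by ring, show lam * (1 - μ) = lam + -(lam * μ) by ring,
      Real.exp_add]
    ring
  rw [expand]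
  calc Real.exp (-(lam * μ)) * (1 - μ + μ * Real.exp lam)
      ≤ Real.exp (-(lam * μ)) * Real.exp (μ * lam + lam ^ 2 / 8) :=
        mul_le_mul_of_nonneg_left key (Real.exp_pos _).le
    _ = Real.exp (lam ^ 2 / 8) := by rw [← Real.exp_add]; ring_nf
lemma sum_bern_mgf (w : ℕ) (c : Fin w → ℝ) (hc0 : ∀ t, 0 ≤ c t) (hc1 : ∀ t, c t ≤ 1) (u : ℝ) :
    ∑ z : Fin w → Bool, (∏ t, if z t then c t else 1 - c t) *
      Real.exp (u * ((∑ t, if z t then (1:ℝ) else 0) - ∑ t, c t))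
      ≤ Real.exp (w * u ^ 2 / 8) := by
  have hexp : ∀ z : Fin w → Bool,
      Real.exp (u * ((∑ t, if z t then (1:ℝ) else 0) - ∑ t, c t))
        = ∏ t, Real.exp (u * ((if z t then (1:ℝ) else 0) - c t)) := by
    intro z
    rw [← Real.exp_sum]
    congr 1
    rw [← Finset.sum_sub_distrib, Finset.mul_sum]
  calc ∑ z : Fin w → Bool, (∏ t, if z t then c t else 1 - c t) *
        Real.exp (u * ((∑ t, if z t then (1:ℝ) else 0) - ∑ t, c t))
      = ∑ z : Fin w → Bool, ∏ t, ((if z t then c t else 1 - c t) *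
          Real.exp (u * ((if z t then (1:ℝ) else 0) - c t))) := by
        refine Finset.sum_congr rfl fun z _ => ?_
        rw [hexp z, Finset.prod_mul_distrib]
    _ = ∏ t, ∑ b : Bool, ((if b then c t else 1 - c t) *
          Real.exp (u * ((if b then (1:ℝ) else 0) - c t))) := by
        rw [Fintype.prod_sum]
    _ ≤ ∏ t : Fin w, Real.exp (u ^ 2 / 8) := by
        refine Finset.prod_le_prod (fun t _ => ?_) (fun t _ => ?_)
        · refine Finset.sum_nonneg fun b _ => mul_nonneg ?_ (Real.exp_pos _).le
          cases b <;> simp [hc0 t, hc1 t, sub_nonneg]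
        · rw [Fintype.sum_bool]
          simpa [add_comm] using bern_mgf_le (c t) u (hc0 t) (hc1 t)
    _ = Real.exp (w * u ^ 2 / 8) := by
        rw [Finset.prod_const, ← Real.exp_nat_mul]
        norm_num [mul_div_assoc]

lemma finite_chernoff (w : ℕ) (hw : 0 < w) (c : Fin w → ℝ)
    (hc0 : ∀ t, 0 ≤ c t) (hc1 : ∀ t, c t ≤ 1) (β : ℝ) (hβ : 0 < β) :
    ∑ z : Fin w → Bool, ((∏ t, if z t then c t else 1 - c t) *
      (if β ≤ |(∑ t, if z t then (1:ℝ) else 0) - ∑ t, c t| then (1:ℝ) else 0))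
      ≤ 2 * Real.exp (-2 * β ^ 2 / w) := by
  have hwR : (0:ℝ) < w := Nat.cast_pos.2 hw
  set lam : ℝ := 4 * β / w with hlam
  have hlampos : 0 < lam := by positivity
  set m : ℝ := ∑ t, c t with hm
  have hpt : ∀ z : Fin w → Bool,
      (if β ≤ |(∑ t, if z t then (1:ℝ) else 0) - m| then (1:ℝ) else 0)
        ≤ Real.exp (-(lam * β)) * Real.exp (lam * ((∑ t, if z t then (1:ℝ) else 0) - m))
          + Real.exp (-(lam * β)) * Real.exp ((-lam) * ((∑ t, if z t then (1:ℝ) else 0) - m)) := by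
    intro z
    set S : ℝ := ∑ t, if z t then (1:ℝ) else 0 with hS
    split_ifs with h
    · rcases le_abs.1 h with h' | h'
      · have h1 : (1:ℝ) ≤ Real.exp (-(lam * β)) * Real.exp (lam * (S - m)) := by
          rw [← Real.exp_add]
          refine Real.one_le_exp ?_
          nlinarith
        nlinarith [mul_pos (Real.exp_pos (-(lam * β))) (Real.exp_pos ((-lam) * (S - m)))]
      · have h1 : (1:ℝ) ≤ Real.exp (-(lam * β)) * Real.exp ((-lam) * (S - m)) := by
          rw [← Real.exp_add]
          refine Real.one_le_exp ?_
          nlinarith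
        nlinarith [mul_pos (Real.exp_pos (-(lam * β))) (Real.exp_pos (lam * (S - m)))]
    · positivity
  have hPnn : ∀ z : Fin w → Bool, 0 ≤ ∏ t, if z t then c t else 1 - c t := by
    intro z
    refine Finset.prod_nonneg fun t _ => ?_
    cases hzt : z t <;> simp [hc0 t, hc1 t, sub_nonneg]
  calc ∑ z : Fin w → Bool, ((∏ t, if z t then c t else 1 - c t) *
        (if β ≤ |(∑ t, if z t then (1:ℝ) else 0) - m| then (1:ℝ) else 0))
      ≤ ∑ z : Fin w → Bool, ((∏ t, if z t then c t else 1 - c t) *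
          (Real.exp (-(lam * β)) * Real.exp (lam * ((∑ t, if z t then (1:ℝ) else 0) - m))
          + Real.exp (-(lam * β)) * Real.exp ((-lam) * ((∑ t, if z t then (1:ℝ) else 0) - m)))) := by
        exact Finset.sum_le_sum fun z _ => mul_le_mul_of_nonneg_left (hpt z) (hPnn z)
    _ = Real.exp (-(lam * β)) * (∑ z : Fin w → Bool, (∏ t, if z t then c t else 1 - c t) *
            Real.exp (lam * ((∑ t, if z t then (1:ℝ) else 0) - m)))
        + Real.exp (-(lam * β)) * (∑ z : Fin w → Bool, (∏ t, if z t then c t else 1 - c t) *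
            Real.exp ((-lam) * ((∑ t, if z t then (1:ℝ) else 0) - m))) := by
        rw [Finset.mul_sum, Finset.mul_sum, ← Finset.sum_add_distrib]
        refine Finset.sum_congr rfl fun z _ => ?_
        ring
    _ ≤ Real.exp (-(lam * β)) * Real.exp (w * lam ^ 2 / 8)
        + Real.exp (-(lam * β)) * Real.exp (w * lam ^ 2 / 8) := by
        have h1 := sum_bern_mgf w c hc0 hc1 lam
        have h2 := sum_bern_mgf w c hc0 hc1 (-lam)
        rw [show ((-lam)^2 : ℝ) = lam^2 by ring] at h2
        exact add_le_add (mul_le_mul_of_nonneg_left h1 (Real.exp_pos _).le)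
          (mul_le_mul_of_nonneg_left h2 (Real.exp_pos _).le)
    _ = 2 * Real.exp (-2 * β ^ 2 / w) := by
        rw [← Real.exp_add]
        have : -(lam * β) + w * lam ^ 2 / 8 = -2 * β ^ 2 / w := by
          rw [hlam]; field_simp; ring
        rw [this]; ring



instance : IsProbabilityMeasure (volume.restrict (Set.Icc (0:ℝ) 1)) :=
  ⟨by simp [Real.volume_Icc]⟩

instance (n : ℕ) : IsProbabilityMeasure (uniformCube n) := by
  unfold uniformCube; infer_instance

/-- a.e. point of the cube lies in the box. -/
lemma cube_ae_box (n : ℕ) : ∀ᵐ p ∂uniformCube n, ∀ i, p i ∈ Set.Icc (0:ℝ) 1 := by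
  have hbox : MeasurableSet (Set.univ.pi fun _ : Fin n => Set.Icc (0:ℝ) 1) :=
    MeasurableSet.univ_pi fun _ => measurableSet_Icc
  have hmeas : uniformCube n (Set.univ.pi fun _ : Fin n => Set.Icc (0:ℝ) 1) = 1 := by
    rw [uniformCube, Measure.pi_pi]
    simp [Real.volume_Icc]
  have : uniformCube n (Set.univ.pi fun _ : Fin n => Set.Icc (0:ℝ) 1)ᶜ = 0 := by
    rw [measure_compl hbox (by simp), measure_univ, hmeas, tsub_self]
  filter_upwards [MeasureTheory.measure_eq_zero_iff_ae_notMem.1 this] with p hp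
  have hp' : p ∈ Set.univ.pi fun _ : Fin n => Set.Icc (0:ℝ) 1 := Set.not_notMem.1 hp
  exact fun i => hp' i (Set.mem_univ i)

lemma integrable_cube {n : ℕ} {F : (Fin n → ℝ) → ℝ} (hF : Continuous F) :
    Integrable F (uniformCube n) := by
  obtain ⟨C, hC⟩ := (isCompact_univ_pi fun _ : Fin n => isCompact_Icc).exists_bound_of_continuousOn
    hF.continuousOn
  refine Integrable.mono' (integrable_const C) hF.aestronglyMeasurable ?_
  filter_upwards [cube_ae_box n] with p hp
  exact hC p (by intro i _; exact hp i)

/-- Integrating out one coordinate of the cube, when the rest does not depend on it. -/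
lemma cube_peel {n : ℕ} (i : Fin n) (f : (Fin n → ℝ) → ℝ) (g : ℝ → ℝ)
    (hfi : ∀ p x, f (Function.update p i x) = f p) :
    ∫ p, f p * g (p i) ∂uniformCube n
      = (∫ p, f p ∂uniformCube n) * ∫ x in Set.Icc (0:ℝ) 1, g x := by
  cases n with
  | zero => exact i.elim0
  | succ m =>
    set ν := (volume.restrict (Set.Icc (0:ℝ) 1)).prod (uniformCube m) with hν
    have mp : MeasurePreserving (MeasurableEquiv.piFinSuccAbove (fun _ : Fin (m+1) => ℝ) i)
        (uniformCube (m+1)) ν :=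
      measurePreserving_piFinSuccAbove (fun _ => volume.restrict (Set.Icc (0:ℝ) 1)) i
    set e := MeasurableEquiv.piFinSuccAbove (fun _ : Fin (m+1) => ℝ) i with he
    have key : ∀ F : (Fin (m+1) → ℝ) → ℝ,
        ∫ p, F p ∂uniformCube (m+1) = ∫ q : ℝ × (Fin m → ℝ), F (i.insertNth q.1 q.2) ∂ν := by
      intro F
      have h1 : ∫ p, F p ∂uniformCube (m+1) = ∫ p, F (e.symm (e p)) ∂uniformCube (m+1) := by
        simp
      rw [h1, ← MeasureTheory.integral_map_equiv e (fun q => F (e.symm q)), mp.map_eq]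
      refine integral_congr_ae (Filter.Eventually.of_forall fun q => ?_)
      congr 1
    have hins : ∀ (x : ℝ) (y : Fin m → ℝ), f (i.insertNth x y) = f (i.insertNth 0 y) := by
      intro x y
      have hupd : Fin.insertNth (α := fun _ => ℝ) i x y
          = Function.update (Fin.insertNth (α := fun _ => ℝ) i 0 y) i x := by simp
      rw [hupd, hfi]
    rw [key (fun p => f p * g (p i)), key f]
    have h2 : ∫ q : ℝ × (Fin m → ℝ), f (i.insertNth q.1 q.2) * g ((i.insertNth q.1 q.2 : Fin (m+1) → ℝ) i) ∂ν
        = ∫ q : ℝ × (Fin m → ℝ), g q.1 * f (i.insertNth 0 q.2) ∂ν := by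
      refine integral_congr_ae (Filter.Eventually.of_forall fun q => ?_)
      show f (i.insertNth q.1 q.2) * g ((i.insertNth q.1 q.2 : Fin (m+1) → ℝ) i)
        = g q.1 * f (i.insertNth 0 q.2)
      rw [hins q.1 q.2, Fin.insertNth_apply_same, mul_comm]
    have h3 : ∫ q : ℝ × (Fin m → ℝ), f (i.insertNth q.1 q.2) ∂ν
        = ∫ q : ℝ × (Fin m → ℝ), (1:ℝ) * f (i.insertNth 0 q.2) ∂ν := by
      refine integral_congr_ae (Filter.Eventually.of_forall fun q => ?_)
      show f (i.insertNth q.1 q.2) = 1 * f (i.insertNth 0 q.2)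
      rw [hins q.1 q.2, one_mul]
    rw [h2, h3, hν, integral_prod_mul g (fun y => f (i.insertNth 0 y)),
      integral_prod_mul (fun _ => (1:ℝ)) (fun y => f (i.insertNth 0 y))]
    simp only [integral_const, measure_univ, ENNReal.toReal_one, probReal_univ, smul_eq_mul, one_mul]
    ring

lemma int_id : ∫ x in Set.Icc (0:ℝ) 1, x = 1/2 := by
  rw [MeasureTheory.integral_Icc_eq_integral_Ioc, ← intervalIntegral.integral_of_le zero_le_one]
  simp
lemma int_al_true : ∫ x in Set.Icc (0:ℝ) 1, (x*(1-x) + (1-x)*x) = 1/3 := by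
  rw [MeasureTheory.integral_Icc_eq_integral_Ioc, ← intervalIntegral.integral_of_le zero_le_one]
  have : ∀ x : ℝ, x*(1-x) + (1-x)*x = 2*x - 2*x^2 := fun x => by ring
  simp_rw [this]
  rw [intervalIntegral.integral_sub ((intervalIntegral.intervalIntegrable_id).const_mul 2)
    (((intervalIntegral.intervalIntegrable_pow 2)).const_mul 2),
    intervalIntegral.integral_const_mul, intervalIntegral.integral_const_mul,
    integral_id, integral_pow]
  norm_num
lemma int_al_false : ∫ x in Set.Icc (0:ℝ) 1, (x*x + (1-x)*(1-x)) = 2/3 := by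
  rw [MeasureTheory.integral_Icc_eq_integral_Ioc, ← intervalIntegral.integral_of_le zero_le_one]
  have : ∀ x : ℝ, x*x + (1-x)*(1-x) = 1 - 2*x + 2*x^2 := fun x => by ring
  simp_rw [this]
  rw [intervalIntegral.integral_add ((intervalIntegrable_const.sub
      ((intervalIntegral.intervalIntegrable_id).const_mul 2)))
    (((intervalIntegral.intervalIntegrable_pow 2)).const_mul 2),
    intervalIntegral.integral_sub intervalIntegrable_const
      ((intervalIntegral.intervalIntegrable_id).const_mul 2),
    intervalIntegral.integral_const_mul, intervalIntegral.integral_const_mul,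
    integral_id, integral_pow]
  norm_num

/-- The two-bit chunk factor. -/
noncomputable def Hb (b : Bool) (u v : ℝ) : ℝ :=
  if b then u*(1-v)+(1-u)*v else u*v+(1-u)*(1-v)

lemma Hb_comm (b : Bool) (u v : ℝ) : Hb b u v = Hb b v u := by
  cases b <;> simp [Hb] <;> ring

lemma Hb_cont {n : ℕ} (b : Bool) (a c : Fin n) :
    Continuous (fun p : Fin n → ℝ => Hb b (p a) (p c)) := by
  cases b <;> simp only [Hb, if_true, if_false, Bool.false_eq_true] <;> fun_prop

lemma peel_affine {n : ℕ} (M o : Fin n) (hoM : o ≠ M) (b : Bool)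
    (f : (Fin n → ℝ) → ℝ) (hf : Continuous f)
    (hfi : ∀ p x, f (Function.update p M x) = f p) :
    ∫ p, f p * Hb b (p o) (p M) ∂uniformCube n = (1/2) * ∫ p, f p ∂uniformCube n := by
  classical
  set A : ℝ → ℝ := fun u => if b then u else 1 - u with hA
  set B : ℝ → ℝ := fun u => if b then 1 - 2*u else 2*u - 1 with hB
  have hH : ∀ u v, Hb b u v = A u + B u * v := by
    intro u v; cases b <;> simp [Hb, hA, hB] <;> ring
  have hAc : Continuous A := by cases b <;> simp [hA] <;> fun_prop
  have hBc : Continuous B := by cases b <;> simp [hB] <;> fun_prop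
  have int1 : Integrable (fun p => f p * A (p o)) (uniformCube n) :=
    integrable_cube (hf.mul (hAc.comp (continuous_apply o)))
  have int2 : Integrable (fun p => f p * B (p o) * p M) (uniformCube n) :=
    integrable_cube ((hf.mul (hBc.comp (continuous_apply o))).mul (continuous_apply M))
  have int3 : Integrable (fun p => f p * B (p o) * (1/2 : ℝ)) (uniformCube n) :=
    integrable_cube ((hf.mul (hBc.comp (continuous_apply o))).mul continuous_const)
  have hsplit : ∫ p, f p * Hb b (p o) (p M) ∂uniformCube n
      = ∫ p, (f p * A (p o) + f p * B (p o) * p M) ∂uniformCube n := by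
    refine integral_congr_ae (Filter.Eventually.of_forall fun p => ?_)
    show f p * Hb b (p o) (p M) = f p * A (p o) + f p * B (p o) * p M
    rw [hH]; ring
  have hfi2 : ∀ p x, (fun p => f p * B (p o)) (Function.update p M x)
      = (fun p => f p * B (p o)) p := by
    intro p x
    simp only
    rw [hfi, Function.update_of_ne hoM]
  have hpeel : ∫ p, (fun p => f p * B (p o)) p * (fun x : ℝ => x) (p M) ∂uniformCube n
      = (∫ p, f p * B (p o) ∂uniformCube n) * ∫ x in Set.Icc (0:ℝ) 1, x :=
    cube_peel M (fun p => f p * B (p o)) (fun x => x) hfi2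
  calc ∫ p, f p * Hb b (p o) (p M) ∂uniformCube n
      = ∫ p, (f p * A (p o) + f p * B (p o) * p M) ∂uniformCube n := hsplit
    _ = (∫ p, f p * A (p o) ∂uniformCube n) + ∫ p, f p * B (p o) * p M ∂uniformCube n :=
        integral_add int1 int2
    _ = (∫ p, f p * A (p o) ∂uniformCube n)
        + ∫ p, f p * B (p o) * (1/2 : ℝ) ∂uniformCube n := by
        rw [hpeel, int_id, integral_mul_const]
    _ = ∫ p, (f p * A (p o) + f p * B (p o) * (1/2:ℝ)) ∂uniformCube n :=
        (integral_add int1 int3).symm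
    _ = ∫ p, f p * (1/2 : ℝ) ∂uniformCube n := by
        refine integral_congr_ae (Filter.Eventually.of_forall fun p => ?_)
        have : A (p o) + B (p o) * (1/2:ℝ) = 1/2 := by cases b <;> simp [hA, hB] <;> ring
        show f p * A (p o) + f p * B (p o) * (1/2:ℝ) = f p * (1/2:ℝ)
        rw [show f p * A (p o) + f p * B (p o) * (1/2:ℝ)
            = f p * (A (p o) + B (p o) * (1/2:ℝ)) by ring, this]
    _ = (1/2) * ∫ p, f p ∂uniformCube n := by rw [integral_mul_const]; ring

lemma cube_integral_prod_Hb {n : ℕ} : ∀ (w : ℕ) (σ τ : Fin w → Fin n), StrictMono σ →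
    StrictMono τ → ∀ z : Fin w → Bool,
    (∫ p, (∏ t, Hb (z t) (p (σ t)) (p (τ t))) ∂uniformCube n)
      = ∏ t, (if σ t = τ t then (if z t then (1:ℝ)/3 else 2/3) else 1/2) := by
  intro w
  induction w with
  | zero => intro σ τ _ _ z; simp
  | succ w ih =>
    intro σ τ hσ hτ z
    set L := Fin.last w with hL
    have hcastσ : ∀ s : Fin w, σ s.castSucc < σ L := fun s => hσ (Fin.castSucc_lt_last s)
    have hcastτ : ∀ s : Fin w, τ s.castSucc < τ L := fun s => hτ (Fin.castSucc_lt_last s)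
    set f : (Fin n → ℝ) → ℝ :=
      fun p => ∏ t : Fin w, Hb (z t.castSucc) (p (σ t.castSucc)) (p (τ t.castSucc)) with hf
    have hfc : Continuous f := continuous_finset_prod _ fun t _ => Hb_cont _ _ _
    have hIH : ∫ p, f p ∂uniformCube n
        = ∏ t : Fin w, (if σ t.castSucc = τ t.castSucc
            then (if z t.castSucc then (1:ℝ)/3 else 2/3) else 1/2) := by
      exact ih (fun t => σ t.castSucc) (fun t => τ t.castSucc)
        (fun a b h => hσ (Fin.castSucc_lt_castSucc_iff.2 h))
        (fun a b h => hτ (Fin.castSucc_lt_castSucc_iff.2 h))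
        (fun t => z t.castSucc)
    have hsplitL : (∫ p, (∏ t, Hb (z t) (p (σ t)) (p (τ t))) ∂uniformCube n)
        = ∫ p, f p * Hb (z L) (p (σ L)) (p (τ L)) ∂uniformCube n := by
      refine integral_congr_ae (Filter.Eventually.of_forall fun p => ?_)
      exact Fin.prod_univ_castSucc _
    have hRHS : (∏ t : Fin (w+1), (if σ t = τ t then (if z t then (1:ℝ)/3 else 2/3) else 1/2))
        = (∏ t : Fin w, (if σ t.castSucc = τ t.castSucc
            then (if z t.castSucc then (1:ℝ)/3 else 2/3) else 1/2))
          * (if σ L = τ L then (if z L then (1:ℝ)/3 else 2/3) else 1/2) :=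
      Fin.prod_univ_castSucc _
    rw [hsplitL, hRHS, ← hIH]
    rcases lt_trichotomy (σ L) (τ L) with hlt | heq | hgt
    · have hfiM : ∀ p x, f (Function.update p (τ L) x) = f p := by
        intro p x
        refine Finset.prod_congr rfl fun t _ => ?_
        rw [Function.update_of_ne ((hcastσ t).trans hlt).ne,
          Function.update_of_ne (hcastτ t).ne]
      rw [peel_affine (τ L) (σ L) hlt.ne (z L) f hfc hfiM, if_neg hlt.ne]
      ring
    · have hfiM : ∀ p x, f (Function.update p (σ L) x) = f p := by
        intro p x
        refine Finset.prod_congr rfl fun t _ => ?_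
        rw [Function.update_of_ne (hcastσ t).ne,
          Function.update_of_ne (show τ t.castSucc ≠ σ L from (heq ▸ (hcastτ t)).ne)]
      have hint : ∫ p, f p * Hb (z L) (p (σ L)) (p (τ L)) ∂uniformCube n
          = ∫ p, f p * (fun u => Hb (z L) u u) (p (σ L)) ∂uniformCube n := by
        refine integral_congr_ae (Filter.Eventually.of_forall fun p => ?_)
        rw [← heq]
      rw [hint, cube_peel (σ L) f (fun u => Hb (z L) u u) hfiM, if_pos heq]
      congr 1
      cases z L
      · simp only [Hb, Bool.false_eq_true, if_false]
        exact int_al_false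
      · simp only [Hb, if_true]
        exact int_al_true
    · have hfiM : ∀ p x, f (Function.update p (σ L) x) = f p := by
        intro p x
        refine Finset.prod_congr rfl fun t _ => ?_
        rw [Function.update_of_ne (hcastσ t).ne,
          Function.update_of_ne ((hcastτ t).trans hgt).ne]
      have hint : ∫ p, f p * Hb (z L) (p (σ L)) (p (τ L)) ∂uniformCube n
          = ∫ p, f p * Hb (z L) (p (τ L)) (p (σ L)) ∂uniformCube n := by
        refine integral_congr_ae (Filter.Eventually.of_forall fun p => ?_)
        show f p * Hb (z L) (p (σ L)) (p (τ L)) = f p * Hb (z L) (p (τ L)) (p (σ L))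
        rw [Hb_comm]
      rw [hint, peel_affine (σ L) (τ L) hgt.ne (z L) f hfc hfiM, if_neg hgt.ne']
      ring



set_option maxHeartbeats 4000000 in
/-- Pointwise algebraic rewriting of the double sum over bit strings. -/
lemma sum_xy_eq (w : ℕ) (u v : Fin w → ℝ) (m β : ℝ) :
    (∑ x : Fin w → Bool, ∑ y : Fin w → Bool,
      (∏ t, if x t then u t else 1 - u t) * (∏ t, if y t then v t else 1 - v t) *
      (if β ≤ |(∑ t, |(if x t then (1:ℝ) else 0) - (if y t then (1:ℝ) else 0)|) - m|
        then (1:ℝ) else 0))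
    = ∑ z : Fin w → Bool, (∏ t, Hb (z t) (u t) (v t)) *
        (if β ≤ |(∑ t, if z t then (1:ℝ) else 0) - m| then (1:ℝ) else 0) := by
  classical
  set J : (Fin w → Bool) → ℝ :=
    fun z => if β ≤ |(∑ t, if z t then (1:ℝ) else 0) - m| then (1:ℝ) else 0 with hJ
  have habs : ∀ (x y : Fin w → Bool) (t : Fin w),
      |(if x t then (1:ℝ) else 0) - (if y t then (1:ℝ) else 0)|
        = (if xor (x t) (y t) then (1:ℝ) else 0) := by
    intro x y t; cases hx : x t <;> cases hy : y t <;> norm_num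
  have stepA : ∀ (x y : Fin w → Bool),
      (if β ≤ |(∑ t, |(if x t then (1:ℝ) else 0) - (if y t then (1:ℝ) else 0)|) - m|
        then (1:ℝ) else 0) = J (fun t => xor (x t) (y t)) := by
    intro x y
    rw [hJ]
    have : (∑ t, |(if x t then (1:ℝ) else 0) - (if y t then (1:ℝ) else 0)|)
        = ∑ t, (if xor (x t) (y t) then (1:ℝ) else 0) :=
      Finset.sum_congr rfl fun t _ => habs x y t
    rw [this]
  have hinv : ∀ x : Fin w → Bool,
      Function.Involutive (fun z : Fin w → Bool => fun t => xor (x t) (z t)) := by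
    intro x z
    funext t
    simp only
    cases hx : x t <;> cases hz : z t <;> simp [hx, hz]
  calc (∑ x : Fin w → Bool, ∑ y : Fin w → Bool,
        (∏ t, if x t then u t else 1 - u t) * (∏ t, if y t then v t else 1 - v t) *
        (if β ≤ |(∑ t, |(if x t then (1:ℝ) else 0) - (if y t then (1:ℝ) else 0)|) - m|
          then (1:ℝ) else 0))
      = ∑ x : Fin w → Bool, ∑ y : Fin w → Bool,
        (∏ t, if x t then u t else 1 - u t) * (∏ t, if y t then v t else 1 - v t) *
          J (fun t => xor (x t) (y t)) := by
        refine Finset.sum_congr rfl fun x _ => Finset.sum_congr rfl fun y _ => ?_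
        rw [stepA]
    _ = ∑ x : Fin w → Bool, ∑ z : Fin w → Bool,
        (∏ t, if x t then u t else 1 - u t) *
          (∏ t, if xor (x t) (z t) then v t else 1 - v t) * J z := by
        refine Finset.sum_congr rfl fun x _ => ?_
        rw [← Equiv.sum_comp ((hinv x).toPerm _)
          (fun y => (∏ t, if x t then u t else 1 - u t) *
            (∏ t, if y t then v t else 1 - v t) * J (fun t => xor (x t) (y t)))]
        refine Finset.sum_congr rfl fun z _ => ?_
        have h1 : ∀ t : Fin w, xor (x t) (xor (x t) (z t)) = z t := by
          intro t; cases hx : x t <;> cases hz : z t <;> rfl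
        have h2 : ((hinv x).toPerm _ z : Fin w → Bool) = fun t => xor (x t) (z t) := rfl
        rw [h2]
        have h3 : (fun t => xor (x t) ((fun t => xor (x t) (z t)) t)) = z := funext h1
        rw [h3]
    _ = ∑ z : Fin w → Bool, ∑ x : Fin w → Bool,
        (∏ t, if x t then u t else 1 - u t) *
          (∏ t, if xor (x t) (z t) then v t else 1 - v t) * J z := Finset.sum_comm
    _ = ∑ z : Fin w → Bool, (∏ t, Hb (z t) (u t) (v t)) * J z := by
        refine Finset.sum_congr rfl fun z _ => ?_
        rw [← Finset.sum_mul]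
        congr 1
        calc ∑ x : Fin w → Bool, (∏ t, if x t then u t else 1 - u t) *
              (∏ t, if xor (x t) (z t) then v t else 1 - v t)
            = ∑ x : Fin w → Bool, ∏ t, ((if x t then u t else 1 - u t) *
                (if xor (x t) (z t) then v t else 1 - v t)) := by
              refine Finset.sum_congr rfl fun x _ => ?_
              rw [Finset.prod_mul_distrib]
          _ = ∏ t, ∑ b : Bool, ((if b then u t else 1 - u t) *
                (if xor b (z t) then v t else 1 - v t)) :=
              (Fintype.prod_sum (fun t b => (if b then u t else 1 - u t) *
                (if xor b (z t) then v t else 1 - v t))).symm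
          _ = ∏ t, Hb (z t) (u t) (v t) := by
              refine Finset.prod_congr rfl fun t _ => ?_
              rw [Fintype.sum_bool]
              cases hz : z t <;> simp [Hb] <;> ring

/-- Hoeffding-type concentration for the Hamming distance of two chunks: let
`σ, τ : {1,…,w} → {1,…,n}` be strictly increasing position maps, let `p₁,…,pₙ` be
i.i.d. uniform on `[0,1]`, and conditionally on `p` let `X_t ~ Bern(p_{σ(t)})` and
`Y_t ~ Bern(p_{τ(t)})` be mutually independent bits. With `q` the number of aligned
indices (`σ(t) = τ(t)`) and `r = w - q`, for every `β > 0` the probability that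
`|∑_t |X_t - Y_t| - (q/3 + r/2)| ≥ β` is at most `2 exp(-2β²/w)`. The probability is
written as the integral over `p` of the conditional probability of the event. -/
theorem chunk_distance_concentration (n w : ℕ) (hn : 0 < n) (hw : 0 < w)
    (σ τ : Fin w → Fin n) (hσ : StrictMono σ) (hτ : StrictMono τ)
    (q r : ℕ) (hq : q = (Finset.univ.filter (fun t => σ t = τ t)).card) (hr : r = w - q)
    (β : ℝ) (hβ : 0 < β) :
    (∫ p, (∑ x : Fin w → Bool, ∑ y : Fin w → Bool,
        (∏ t, if x t then p (σ t) else 1 - p (σ t)) *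
        (∏ t, if y t then p (τ t) else 1 - p (τ t)) *
        (if β ≤ |(∑ t, |(if x t then (1:ℝ) else 0) - (if y t then (1:ℝ) else 0)|) -
                  ((q:ℝ)/3 + (r:ℝ)/2)| then (1:ℝ) else 0)) ∂(uniformCube n))
      ≤ 2 * Real.exp (-2 * β^2 / w) := by
  classical
  set c : Fin w → ℝ := fun t => if σ t = τ t then 1/3 else 1/2 with hc
  have hc0 : ∀ t, 0 ≤ c t := fun t => by rw [hc]; dsimp only; split_ifs <;> norm_num
  have hc1 : ∀ t, c t ≤ 1 := fun t => by rw [hc]; dsimp only; split_ifs <;> norm_num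
  have hqw : q ≤ w := by
    rw [hq]
    simpa using Finset.card_filter_le Finset.univ (fun t => σ t = τ t)
  have hm : (q:ℝ)/3 + (r:ℝ)/2 = ∑ t, c t := by
    have hcardsum := Finset.card_filter_add_card_filter_not
      (s := (Finset.univ : Finset (Fin w))) (p := fun t => σ t = τ t)
    have hcardw : (Finset.univ : Finset (Fin w)).card = w := by simp
    have hcardneg : (Finset.univ.filter (fun t => ¬ σ t = τ t)).card = w - q := by omega
    have hsum : ∑ t, c t
        = ((Finset.univ.filter (fun t => σ t = τ t)).card : ℝ) * (1/3)
          + ((Finset.univ.filter (fun t => ¬ σ t = τ t)).card : ℝ) * (1/2) := by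
      rw [hc]
      rw [Finset.sum_ite, Finset.sum_const, Finset.sum_const, nsmul_eq_mul, nsmul_eq_mul]
    rw [hsum, ← hq, hcardneg, ← hr]
    have : (r:ℝ) = (w:ℝ) - (q:ℝ) := by rw [hr, Nat.cast_sub hqw]
    ring
  have hpt : ∀ p : Fin n → ℝ,
      (∑ x : Fin w → Bool, ∑ y : Fin w → Bool,
        (∏ t, if x t then p (σ t) else 1 - p (σ t)) *
        (∏ t, if y t then p (τ t) else 1 - p (τ t)) *
        (if β ≤ |(∑ t, |(if x t then (1:ℝ) else 0) - (if y t then (1:ℝ) else 0)|) -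
                  ((q:ℝ)/3 + (r:ℝ)/2)| then (1:ℝ) else 0))
      = ∑ z : Fin w → Bool, (∏ t, Hb (z t) (p (σ t)) (p (τ t))) *
          (if β ≤ |(∑ t, if z t then (1:ℝ) else 0) - ((q:ℝ)/3 + (r:ℝ)/2)|
            then (1:ℝ) else 0) :=
    fun p => sum_xy_eq w (fun t => p (σ t)) (fun t => p (τ t)) ((q:ℝ)/3 + (r:ℝ)/2) β
  rw [integral_congr_ae (Filter.Eventually.of_forall hpt)]
  rw [integral_finset_sum _ (fun z _ => integrable_cube
    (Continuous.fun_mul (continuous_finset_prod _ fun t _ => Hb_cont _ _ _) continuous_const))]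
  have h2 : ∀ z : Fin w → Bool,
      (∫ p, (∏ t, Hb (z t) (p (σ t)) (p (τ t))) *
          (if β ≤ |(∑ t, if z t then (1:ℝ) else 0) - ((q:ℝ)/3 + (r:ℝ)/2)|
            then (1:ℝ) else 0) ∂uniformCube n)
        = (∏ t, if z t then c t else 1 - c t) *
          (if β ≤ |(∑ t, if z t then (1:ℝ) else 0) - ((q:ℝ)/3 + (r:ℝ)/2)|
            then (1:ℝ) else 0) := by
    intro z
    rw [integral_mul_const, cube_integral_prod_Hb w σ τ hσ hτ z]
    congr 1
    refine Finset.prod_congr rfl fun t _ => ?_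
    by_cases h : σ t = τ t <;> cases hz : z t <;> simp [hc, h, hz] <;> norm_num
  rw [Finset.sum_congr rfl fun z _ => h2 z]
  rw [show ((q:ℝ)/3 + (r:ℝ)/2) = ∑ t, c t from hm]
  exact finite_chernoff w hw c hc0 hc1 β hβ
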